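/- Abstract continuation/Grönwall argument (the core of Section 4.4): let T > 0, η > 0, K ≥ 0, let D : [0,T] → [0,∞) be integrable, set E := exp(∫₀^T D(t)dt), and let N : [0,T] → [0,∞) be continuous and nondecreasing with N(0) ≤ η. Assume that 16 K η E² ≤ 1 and that for every τ ∈ [0,T] with N(τ) ≤ 4ηE one has N(τ) ≤ η + ∫₀^τ D(t) N(t) dt + K (sup_{t∈[0,τ]} N(t))². Then N(τ) ≤ 2ηE for all τ ∈ [0,T]. -/

import Mathlib

open MeasureTheory Set Filter Topology

noncomputable section

private lemma avg_Icc {f : ℝ → ℝ} (hf : Integrable f) {a b : ℝ} (h : a < b) :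
    ⨍ t in Icc a b, f t
      = ((∫ t in (0:ℝ)..b, f t) - ∫ t in (0:ℝ)..a, f t) / (b - a) := by
  rw [setAverage_eq, Real.volume_real_Icc_of_le h.le,
    smul_eq_mul, integral_Icc_eq_integral_Ioc, ← intervalIntegral.integral_of_le h.le,
    intervalIntegral.integral_interval_sub_left hf.intervalIntegrable hf.intervalIntegrable,
    div_eq_inv_mul]

lemma ae_hasDerivAt_primitive {f : ℝ → ℝ} (hf : Integrable f) :
    ∀ᵐ x, HasDerivAt (fun y => ∫ t in (0:ℝ)..y, f t) (f x) x := by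
  filter_upwards [IsUnifLocDoublingMeasure.ae_tendsto_average (μ := (volume : Measure ℝ))
    hf.locallyIntegrable 1] with x hx
  rw [hasDerivAt_iff_tendsto_slope, ← nhdsLT_sup_nhdsGT, tendsto_sup]
  constructor
  · -- left limit
    have key := hx (l := 𝓝[<] x) (fun y => (x+y)/2) (fun y => (x-y)/2) ?_ ?_
    · refine key.congr' ?_
      filter_upwards [self_mem_nhdsWithin] with y (hy : y < x)
      have hball : Metric.closedBall ((x+y)/2) ((x-y)/2) = Icc y x := by
        rw [Real.closedBall_eq_Icc]
        congr 1 <;> ring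
      rw [hball, avg_Icc hf hy, slope_def_field]
      rw [div_eq_div_iff (by linarith) (by intro hc; rw [sub_eq_zero] at hc; linarith)]
      ring
    · rw [Filter.tendsto_iff_forall_eventually_mem]
      intro s hs
      rcases (mem_nhdsGT_iff_exists_Ioc_subset (a := (0:ℝ))).1 hs with ⟨u, hu, hsub⟩
      filter_upwards [Ioo_mem_nhdsLT (by
        simp only [mem_Ioi] at hu; linarith : x - 2*u < x)] with y hy
      exact hsub ⟨by simp only [mem_Ioo] at hy; linarith, by simp only [mem_Ioo] at hy; linarith⟩
    · filter_upwards [self_mem_nhdsWithin] with y (hy : y < x)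
      simp only [Metric.mem_closedBall, Real.dist_eq, one_mul]
      rw [abs_of_nonneg (by linarith)]
      linarith
  · -- right limit
    have key := hx (l := 𝓝[>] x) (fun y => (x+y)/2) (fun y => (y-x)/2) ?_ ?_
    · refine key.congr' ?_
      filter_upwards [self_mem_nhdsWithin] with y (hy : x < y)
      have hball : Metric.closedBall ((x+y)/2) ((y-x)/2) = Icc x y := by
        rw [Real.closedBall_eq_Icc]
        congr 1 <;> ring
      rw [hball, avg_Icc hf hy, slope_def_field]
    · rw [Filter.tendsto_iff_forall_eventually_mem]
      intro s hs
      rcases (mem_nhdsGT_iff_exists_Ioc_subset (a := (0:ℝ))).1 hs with ⟨u, hu, hsub⟩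
      filter_upwards [Ioo_mem_nhdsGT (by
        simp only [mem_Ioi] at hu; linarith : x < x + 2*u)] with y hy
      exact hsub ⟨by simp only [mem_Ioo] at hy; linarith, by simp only [mem_Ioo] at hy; linarith⟩
    · filter_upwards [self_mem_nhdsWithin] with y (hy : x < y)
      simp only [Metric.mem_closedBall, Real.dist_eq, one_mul]
      rw [abs_of_nonpos (by linarith)]
      linarith

private lemma integral_mul_exp_primitive_le {f : ℝ → ℝ} (hf : Integrable f)
    (h0 : ∀ x, 0 ≤ f x) {τ : ℝ} (hτ : 0 ≤ τ) :
    ∫ t in (0:ℝ)..τ, f t * Real.exp (∫ s in (0:ℝ)..t, f s)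
      ≤ Real.exp (∫ t in (0:ℝ)..τ, f t) - 1 := by
  set F : ℝ → ℝ := fun y => ∫ t in (0:ℝ)..y, f t with hF
  set g : ℝ → ℝ := fun y => Real.exp (F y) with hg
  have hFmono : Monotone F := by
    intro a b hab
    have : F b - F a = ∫ t in a..b, f t :=
      intervalIntegral.integral_interval_sub_left hf.intervalIntegrable hf.intervalIntegrable
    nlinarith [intervalIntegral.integral_nonneg (μ := volume) hab (fun u _ => h0 u)]
  have hgm : Monotone g := fun a b hab => Real.exp_le_exp.2 (hFmono hab)
  have hFc : Continuous F := intervalIntegral.continuous_primitive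
    (fun a b => hf.intervalIntegrable) 0
  have hgc : Continuous g := Real.continuous_exp.comp hFc
  set μ := hgm.stieltjesFunction.measure with hμ
  have hrn : ∀ᵐ x, (μ.rnDeriv volume x).toReal = f x * g x := by
    filter_upwards [ae_hasDerivAt_primitive hf, hgm.ae_hasDerivAt] with x h1 h2
    have h3 : HasDerivAt g (Real.exp (F x) * f x) x := (Real.hasDerivAt_exp (F x)).comp x h1
    have := h2.unique h3
    rw [this]; ring
  have hst : ∀ x, hgm.stieltjesFunction x = g x := by
    intro x
    rw [hgm.stieltjesFunction_eq]
    exact rightLim_eq_of_tendsto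
      ((hgc.tendsto x).mono_left nhdsWithin_le_nhds)
  have hμIoc : μ (Ioc 0 τ) = ENNReal.ofReal (g τ - g 0) := by
    rw [hμ, StieltjesFunction.measure_Ioc, hst, hst]
  have hμfin : μ (Ioc 0 τ) ≠ ⊤ := by rw [hμIoc]; exact ENNReal.ofReal_ne_top
  have step1 : ∫ t in (0:ℝ)..τ, f t * g t = ∫ t in Ioc (0:ℝ) τ, (μ.rnDeriv volume t).toReal := by
    rw [intervalIntegral.integral_of_le hτ]
    exact integral_congr_ae (ae_restrict_of_ae (hrn.mono fun x h => h.symm))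
  have step2 : ∫ t in Ioc (0:ℝ) τ, (μ.rnDeriv volume t).toReal
      = (∫⁻ t in Ioc (0:ℝ) τ, μ.rnDeriv volume t).toReal := by
    apply integral_toReal ((μ.measurable_rnDeriv volume).aemeasurable.restrict)
    exact ae_restrict_of_ae (μ.rnDeriv_lt_top volume)
  have step3 : (∫⁻ t in Ioc (0:ℝ) τ, μ.rnDeriv volume t) ≤ μ (Ioc 0 τ) := by
    have h4 := Measure.withDensity_rnDeriv_le μ volume
    have h5 := h4 (Ioc (0:ℝ) τ)
    rwa [withDensity_apply _ measurableSet_Ioc] at h5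
  have step4 : (∫⁻ t in Ioc (0:ℝ) τ, μ.rnDeriv volume t).toReal ≤ g τ - g 0 := by
    refine le_trans (ENNReal.toReal_mono hμfin step3) ?_
    rw [hμIoc, ENNReal.toReal_ofReal_eq_iff.2]
    exact sub_nonneg.2 (hgm (by positivity))
  have hg0 : g 0 = 1 := by
    simp only [hg, hF, intervalIntegral.integral_same, Real.exp_zero]
  have hgτ : g τ = Real.exp (∫ t in (0:ℝ)..τ, f t) := rfl
  calc ∫ t in (0:ℝ)..τ, f t * g t = _ := step1
    _ = _ := step2
    _ ≤ g τ - g 0 := step4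
    _ = Real.exp (∫ t in (0:ℝ)..τ, f t) - 1 := by rw [hg0, hgτ]

/-- abstract continuation/Grönwall argument, the core of §4.4:
if `N` is continuous, nondecreasing and nonnegative on `[0,T]` with `N(0) ≤ η`,
`16KηE² ≤ 1` with `E = exp(∫₀^T D)`, and whenever `N(τ) ≤ 4ηE` one has
`N(τ) ≤ η + ∫₀^τ D·N + K(sup_{[0,τ]} N)²`, then `N(τ) ≤ 2ηE` on `[0,T]`. -/
theorem continuation_gronwall_argument
    (T η K : ℝ) (hT : 0 < T) (hη : 0 < η) (hK : 0 ≤ K)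
    (D : ℝ → ℝ) (hDpos : ∀ t ∈ Set.Icc (0 : ℝ) T, 0 ≤ D t)
    (hDint : IntegrableOn D (Set.Icc (0 : ℝ) T))
    (E : ℝ) (hE : E = Real.exp (∫ t in (0 : ℝ)..T, D t))
    (N : ℝ → ℝ)
    (hNcont : ContinuousOn N (Set.Icc (0 : ℝ) T))
    (hNmono : MonotoneOn N (Set.Icc (0 : ℝ) T))
    (hNpos : ∀ t ∈ Set.Icc (0 : ℝ) T, 0 ≤ N t)
    (hN0 : N 0 ≤ η)
    (hsmall : 16 * K * η * E ^ 2 ≤ 1)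
    (hrec : ∀ τ ∈ Set.Icc (0 : ℝ) T, N τ ≤ 4 * η * E →
      N τ ≤ η + (∫ t in (0 : ℝ)..τ, D t * N t)
        + K * sSup (N '' Set.Icc (0 : ℝ) τ) ^ 2) :
    ∀ τ ∈ Set.Icc (0 : ℝ) T, N τ ≤ 2 * η * E := by
  set Dp : ℝ → ℝ := (Set.Icc (0:ℝ) T).indicator D with hDp
  have hDp0 : ∀ x, 0 ≤ Dp x := by
    intro x
    by_cases h : x ∈ Set.Icc (0:ℝ) T
    · rw [hDp, Set.indicator_of_mem h]; exact hDpos x h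
    · rw [hDp, Set.indicator_of_notMem h]
  have hDpInt : Integrable Dp := (integrable_indicator_iff measurableSet_Icc).2 hDint
  set g : ℝ → ℝ := fun y => Real.exp (∫ t in (0:ℝ)..y, Dp t) with hg
  have hgm : Monotone g := by
    intro a b hab
    apply Real.exp_le_exp.2
    have h1 : (∫ t in (0:ℝ)..b, Dp t) - ∫ t in (0:ℝ)..a, Dp t = ∫ t in a..b, Dp t :=
      intervalIntegral.integral_interval_sub_left hDpInt.intervalIntegrable
        hDpInt.intervalIntegrable
    nlinarith [intervalIntegral.integral_nonneg (μ := volume) hab (fun u _ => hDp0 u)]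
  have hgcont : Continuous g :=
    Real.continuous_exp.comp (intervalIntegral.continuous_primitive
      (fun a b => hDpInt.intervalIntegrable) 0)
  have hcongr : ∀ τ ∈ Set.Icc (0:ℝ) T, ∀ φ : ℝ → ℝ,
      (∫ t in (0:ℝ)..τ, Dp t * φ t) = ∫ t in (0:ℝ)..τ, D t * φ t := by
    intro τ hτ φ
    apply intervalIntegral.integral_congr
    intro t ht
    rw [Set.uIcc_of_le hτ.1] at ht
    have : t ∈ Set.Icc (0:ℝ) T := ⟨ht.1, ht.2.trans hτ.2⟩
    simp only [hDp, Set.indicator_of_mem this]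
  have hint_eq : (∫ t in (0:ℝ)..T, Dp t) = ∫ t in (0:ℝ)..T, D t := by
    apply intervalIntegral.integral_congr
    intro t ht
    rw [Set.uIcc_of_le hT.le] at ht
    simp only [hDp, Set.indicator_of_mem ht]
  have hgT : g T = E := by
    rw [hE]
    show Real.exp (∫ t in (0:ℝ)..T, Dp t) = _
    rw [hint_eq]
  have hgle : ∀ τ ∈ Set.Icc (0:ℝ) T, g τ ≤ E := fun τ hτ => hgT ▸ hgm hτ.2
  have hg0 : g 0 = 1 := by simp [hg]
  have hg1 : ∀ τ, 0 ≤ τ → 1 ≤ g τ := fun τ hτ => by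
    rw [← hg0]; exact hgm hτ
  have hE1 : 1 ≤ E := hgT ▸ hg1 T hT.le
  have hEpos : 0 < E := lt_of_lt_of_le one_pos hE1
  -- key strict inequality
  have key : ∀ c, 2*η < c → c ≤ 4*η → ∀ τ ∈ Set.Icc (0:ℝ) T,
      (∀ t ∈ Set.Icc (0:ℝ) τ, N t ≤ c * g t) → N τ < c * g τ := by
    intro c hc1 hc2 τ hτ hQ
    have hc0 : 0 < c := by linarith
    have hgτE := hgle τ hτ
    have hgτ0 : 0 < g τ := Real.exp_pos _
    have hNc : N τ ≤ c * g τ := hQ τ ⟨hτ.1, le_refl τ⟩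
    have hN4 : N τ ≤ 4 * η * E := by
      refine hNc.trans ?_
      calc c * g τ ≤ (4*η) * g τ := mul_le_mul_of_nonneg_right hc2 hgτ0.le
        _ ≤ (4*η) * E := mul_le_mul_of_nonneg_left hgτE (by linarith)
        _ = 4 * η * E := by ring
    have h5 := hrec τ hτ hN4
    have hsup : sSup (N '' Set.Icc (0:ℝ) τ) = N τ := by
      apply IsGreatest.csSup_eq
      constructor
      · exact ⟨τ, ⟨hτ.1, le_refl τ⟩, rfl⟩
      · rintro y ⟨t, ht, rfl⟩
        exact hNmono ⟨ht.1, ht.2.trans hτ.2⟩ hτ ht.2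
    rw [hsup] at h5
    have hKt : K * N τ ^ 2 ≤ η := by
      nlinarith [mul_le_mul hN4 hN4 (hNpos τ hτ) (by positivity : (0:ℝ) ≤ 4*η*E),
        mul_le_mul_of_nonneg_right hsmall hη.le,
        mul_le_mul_of_nonneg_left
          (mul_le_mul hN4 hN4 (hNpos τ hτ) (by positivity : (0:ℝ) ≤ 4*η*E)) hK]
    have hNIcc : ContinuousOn N (Set.uIcc (0:ℝ) τ) := by
      rw [Set.uIcc_of_le hτ.1]
      exact hNcont.mono (Set.Icc_subset_Icc le_rfl hτ.2)
    have hintegr1 : IntervalIntegrable (fun t => Dp t * N t) volume 0 τ :=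
      hDpInt.intervalIntegrable.mul_continuousOn hNIcc
    have hintegr2 : IntervalIntegrable (fun t => Dp t * (c * g t)) volume 0 τ :=
      hDpInt.intervalIntegrable.mul_continuousOn ((continuous_const.mul hgcont).continuousOn)
    have hmono : (∫ t in (0:ℝ)..τ, Dp t * N t) ≤ ∫ t in (0:ℝ)..τ, Dp t * (c * g t) := by
      apply intervalIntegral.integral_mono_on hτ.1 hintegr1 hintegr2
      intro t ht
      exact mul_le_mul_of_nonneg_left (hQ t ht) (hDp0 t)
    have hkeyint : (∫ t in (0:ℝ)..τ, Dp t * (c * g t)) = c * ∫ t in (0:ℝ)..τ, Dp t * g t := by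
      rw [← intervalIntegral.integral_const_mul]
      apply intervalIntegral.integral_congr
      intro t _
      ring
    have hB : (∫ t in (0:ℝ)..τ, Dp t * g t) ≤ g τ - 1 :=
      integral_mul_exp_primitive_le hDpInt hDp0 hτ.1
    have hint : (∫ t in (0:ℝ)..τ, D t * N t) ≤ c * (g τ - 1) := by
      rw [← hcongr τ hτ N]
      refine hmono.trans ?_
      rw [hkeyint]
      exact mul_le_mul_of_nonneg_left hB hc0.le
    have := hg1 τ hτ.1
    nlinarith [h5, hKt, hint]
  -- continuous induction
  have mainc : ∀ c, 2*η < c → c ≤ 4*η → ∀ τ ∈ Set.Icc (0:ℝ) T, N τ ≤ c * g τ := by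
    intro c hc1 hc2
    set S : Set ℝ := {x | x ∈ Set.Icc (0:ℝ) T ∧ ∀ t ∈ Set.Icc (0:ℝ) x, N t ≤ c * g t} with hS
    have hbase : ∀ t ∈ Set.Icc (0:ℝ) (0:ℝ), N t ≤ c * g t := by
      intro t ht
      have ht0 : t = 0 := le_antisymm ht.2 ht.1
      rw [ht0, hg0, mul_one]
      linarith
    have h0S : (0:ℝ) ∈ S := ⟨⟨le_refl _, hT.le⟩, hbase⟩
    have hbdd : BddAbove S := ⟨T, fun x hx => hx.1.2⟩
    set s := sSup S with hs
    have hs0 : 0 ≤ s := le_csSup hbdd h0S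
    have hsT : s ≤ T := csSup_le ⟨0, h0S⟩ (fun x hx => hx.1.2)
    have hQlt : ∀ t, 0 ≤ t → t < s → N t ≤ c * g t := by
      intro t ht0 hts
      obtain ⟨x, hxS, htx⟩ := exists_lt_of_lt_csSup ⟨0, h0S⟩ hts
      exact hxS.2 t ⟨ht0, htx.le⟩
    have hQs : ∀ t ∈ Set.Icc (0:ℝ) s, N t ≤ c * g t := by
      intro t ht
      rcases ht.2.lt_or_eq with h | h
      · exact hQlt t ht.1 h
      · rcases eq_or_lt_of_le hs0 with h0s | h0s
        · rw [h]; rw [← h0s]; exact hbase 0 ⟨le_refl _, le_refl _⟩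
        · haveI : (𝓝[Set.Ico (0:ℝ) s] s).NeBot := by
            rw [← mem_closure_iff_nhdsWithin_neBot, closure_Ico h0s.ne]
            exact ⟨hs0, le_refl s⟩
          have hNt : Tendsto N (𝓝[Set.Ico (0:ℝ) s] s) (𝓝 (N s)) :=
            (hNcont s ⟨hs0, hsT⟩).mono_left
              (nhdsWithin_mono s (fun x hx => ⟨hx.1, hx.2.le.trans hsT⟩))
          have hgt : Tendsto (fun t => c * g t) (𝓝[Set.Ico (0:ℝ) s] s) (𝓝 (c * g s)) :=
            ((continuous_const.mul hgcont).tendsto s).mono_left nhdsWithin_le_nhds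
          rw [h]
          refine le_of_tendsto_of_tendsto hNt hgt ?_
          filter_upwards [self_mem_nhdsWithin] with x hx
          exact hQlt x hx.1 hx.2
    have hseT : s = T := by
      by_contra hne
      have hslt : s < T := lt_of_le_of_ne hsT hne
      have hpos : 0 < c * g s - N s := sub_pos.2 (key c hc1 hc2 s ⟨hs0, hsT⟩ hQs)
      have hcw : ContinuousWithinAt (fun t => c * g t - N t) (Set.Icc (0:ℝ) T) s :=
        (((continuous_const.mul hgcont).continuousOn.sub hNcont)) s ⟨hs0, hsT⟩
      obtain ⟨ε, hε, hsub⟩ := Metric.mem_nhdsWithin_iff.1 (hcw (Ioi_mem_nhds hpos))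
      set s' := min T (s + ε/2) with hs'
      have hss' : s < s' := lt_min hslt (by linarith)
      have hs'mem : s' ∈ Set.Icc (0:ℝ) T := ⟨hs0.trans hss'.le, min_le_left _ _⟩
      have hs'S : s' ∈ S := by
        refine ⟨hs'mem, ?_⟩
        intro t ht
        rcases le_or_gt t s with h | h
        · exact hQs t ⟨ht.1, h⟩
        · have htT : t ∈ Set.Icc (0:ℝ) T := ⟨ht.1, ht.2.trans hs'mem.2⟩
          have htb : t ∈ Metric.ball s ε := by
            rw [Metric.mem_ball, Real.dist_eq, abs_of_pos (by linarith : 0 < t - s)]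
            have : t ≤ s + ε/2 := ht.2.trans (min_le_right _ _)
            linarith
          have := hsub ⟨htb, htT⟩
          simp only [Set.mem_preimage, Set.mem_Ioi] at this
          linarith
      exact absurd (le_csSup hbdd hs'S) (not_le.2 hss')
    intro τ hτ
    exact hQs τ ⟨hτ.1, hseT ▸ hτ.2⟩
  -- pass to the limit c → 2η
  intro τ hτ
  refine le_of_forall_pos_le_add ?_
  intro ε hε
  set c := 2*η + min η (ε/E) with hc
  have hminpos : 0 < min η (ε/E) := lt_min hη (div_pos hε hEpos)
  have hc1 : 2*η < c := by rw [hc]; linarith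
  have hc2 : c ≤ 4*η := by
    have := min_le_left η (ε/E)
    rw [hc]; linarith
  have h := mainc c hc1 hc2 τ hτ
  have h2 : c * g τ ≤ c * E := mul_le_mul_of_nonneg_left (hgle τ hτ) (by linarith)
  have h3 : min η (ε/E) * E ≤ ε := by
    calc min η (ε/E) * E ≤ (ε/E) * E :=
          mul_le_mul_of_nonneg_right (min_le_right _ _) hEpos.le
      _ = ε := div_mul_cancel₀ ε hEpos.ne'
  calc N τ ≤ c * g τ := h
    _ ≤ c * E := h2
    _ = 2*η*E + min η (ε/E) * E := by rw [hc]; ring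
    _ ≤ 2*η*E + ε := by linarith
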